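/- For a > 0 and b > 1 with a/log b ≤ 1/2, ∫_0^∞ exp(−a t b^t) dt ≤ e^{a/log b} · (−Ei(−a/log b))/log b ≤ e^{1/2}(−γ − log(a/log b) + 1/2)/log b. -/

import Mathlib

open MeasureTheory Set Filter Real

/-- The exponential integral `Ei y` for `y < 0`, defined by
`Ei(-x) = -∫_x^∞ e^{-t}/t dt` for `x > 0`. -/
noncomputable def Ei (y : ℝ) : ℝ := -∫ t in Ioi (-y), Real.exp (-t) / t

lemma aux_log_abs_bound {t : ℝ} (ht : 0 < t) : |Real.log t| ≤ 2 * t ^ (-(2⁻¹:ℝ)) + t := by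
  have hp : (0:ℝ) < t ^ (-(2⁻¹:ℝ)) := Real.rpow_pos_of_pos ht _
  rcases le_total 1 t with h1 | h1
  · rw [abs_of_nonneg (Real.log_nonneg h1)]
    have := Real.log_le_sub_one_of_pos ht
    nlinarith
  · rw [abs_of_nonpos (Real.log_nonpos ht.le h1)]
    have h2 : Real.log (t ^ (-(2⁻¹:ℝ))) = -(2⁻¹:ℝ) * Real.log t := Real.log_rpow ht _
    have h3 : Real.log (t ^ (-(2⁻¹:ℝ))) ≤ t ^ (-(2⁻¹:ℝ)) - 1 := Real.log_le_sub_one_of_pos hp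
    nlinarith

lemma intOn_exp_log : IntegrableOn (fun t => Real.exp (-t) * Real.log t) (Ioi (0:ℝ)) := by
  have hbound : IntegrableOn
      (fun t : ℝ => 2 * (Real.exp (-t) * t ^ ((2⁻¹:ℝ) - 1)) + Real.exp (-t) * t ^ ((2:ℝ) - 1))
      (Ioi (0:ℝ)) :=
    ((Real.GammaIntegral_convergent (by norm_num : (0:ℝ) < 2⁻¹)).const_mul 2).add
      (Real.GammaIntegral_convergent (by norm_num : (0:ℝ) < 2))
  refine Integrable.mono' hbound ?_ ?_
  · refine (ContinuousOn.aestronglyMeasurable ?_ measurableSet_Ioi)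
    exact (Real.continuous_exp.comp continuous_neg).continuousOn.mul
      (Real.continuousOn_log.mono (fun x hx => ne_of_gt hx))
  · filter_upwards [ae_restrict_mem measurableSet_Ioi] with t ht
    have ht' : (0:ℝ) < t := ht
    have h1 : |Real.log t| ≤ 2 * t ^ (-(2⁻¹:ℝ)) + t := aux_log_abs_bound ht'
    have he : (0:ℝ) < Real.exp (-t) := Real.exp_pos _
    have : ‖Real.exp (-t) * Real.log t‖ = Real.exp (-t) * |Real.log t| := by
      rw [norm_mul, Real.norm_eq_abs, Real.norm_eq_abs, abs_of_pos he]
    rw [this]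
    have h2 : Real.exp (-t) * |Real.log t| ≤ Real.exp (-t) * (2 * t ^ (-(2⁻¹:ℝ)) + t) :=
      mul_le_mul_of_nonneg_left h1 he.le
    refine h2.trans (le_of_eq ?_)
    have e1 : ((2⁻¹:ℝ) - 1) = -(2⁻¹:ℝ) := by norm_num
    have e2 : ((2:ℝ) - 1) = 1 := by norm_num
    rw [e1, e2, Real.rpow_one]
    ring

lemma integral_exp_log :
    ∫ t in Ioi (0:ℝ), Real.exp (-t) * Real.log t = -Real.eulerMascheroniConstant := by
  have h0 : (0:ℝ) < (1:ℂ).re := by norm_num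
  have h1 := Complex.hasDerivAt_GammaIntegral h0
  have hint : (∫ t : ℝ in Ioi 0, (t:ℂ) ^ ((1:ℂ) - 1) * (Real.log t * Real.exp (-t)))
      = ((∫ t : ℝ in Ioi 0, Real.exp (-t) * Real.log t : ℝ) : ℂ) := by
    rw [show ((∫ t : ℝ in Ioi 0, Real.exp (-t) * Real.log t : ℝ) : ℂ)
        = ∫ t : ℝ in Ioi 0, ((Real.exp (-t) * Real.log t : ℝ) : ℂ) from integral_ofReal.symm]
    refine setIntegral_congr_fun measurableSet_Ioi (fun t ht => ?_)
    simp only [sub_self, Complex.cpow_zero, one_mul]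
    push_cast
    ring
  rw [hint] at h1
  have hopen : IsOpen {s : ℂ | 0 < s.re} := isOpen_lt continuous_const Complex.continuous_re
  have hev : Complex.Gamma =ᶠ[nhds (1:ℂ)] Complex.GammaIntegral := by
    filter_upwards [hopen.mem_nhds h0] with s hs
    exact Complex.Gamma_eq_integral hs
  have h2 : HasDerivAt Complex.Gamma
      ((∫ t : ℝ in Ioi 0, Real.exp (-t) * Real.log t : ℝ) : ℂ) 1 :=
    h1.congr_of_eventuallyEq hev
  have h3 := Complex.hasDerivAt_Gamma_one
  have h4 := h2.unique h3
  exact_mod_cast h4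

lemma intOn_exp_div {x : ℝ} (hx : 0 < x) :
    IntegrableOn (fun t => Real.exp (-t) / t) (Ioi x) := by
  have hbound : IntegrableOn (fun t : ℝ => x⁻¹ * Real.exp (-(1:ℝ) * t)) (Ioi x) :=
    (exp_neg_integrableOn_Ioi x (by norm_num : (0:ℝ) < 1)).const_mul _
  refine Integrable.mono' hbound ?_ ?_
  · refine (ContinuousOn.aestronglyMeasurable ?_ measurableSet_Ioi)
    exact (Real.continuous_exp.comp continuous_neg).continuousOn.div continuousOn_id
      (fun t ht => ne_of_gt (hx.trans ht))
  · filter_upwards [ae_restrict_mem measurableSet_Ioi] with t ht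
    have ht' : (0:ℝ) < t := hx.trans ht
    rw [Real.norm_eq_abs, abs_of_nonneg (by positivity)]
    rw [div_le_iff₀ ht']
    have : Real.exp (-(1:ℝ) * t) = Real.exp (-t) := by norm_num
    rw [this, inv_mul_eq_div, div_mul_eq_mul_div, le_div_iff₀ hx]
    have := Real.exp_pos (-t)
    nlinarith [le_of_lt (show x < t from ht)]

lemma tendsto_exp_neg_mul_log : Tendsto (fun t => -(Real.exp (-t) * Real.log t)) atTop (nhds 0) := by
  have h0 : Tendsto (fun t : ℝ => Real.exp (-t) * Real.log t) atTop (nhds 0) := by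
    refine squeeze_zero_norm' ?_ (Real.tendsto_pow_mul_exp_neg_atTop_nhds_zero 1)
    filter_upwards [eventually_ge_atTop (1:ℝ)] with t ht
    have ht0 : (0:ℝ) < t := lt_of_lt_of_le one_pos ht
    rw [Real.norm_eq_abs, abs_mul, abs_of_pos (Real.exp_pos _),
      abs_of_nonneg (Real.log_nonneg ht), pow_one]
    have h1 : Real.log t ≤ t := (Real.log_le_sub_one_of_pos ht0).trans (by linarith)
    have := (Real.exp_pos (-t)).le
    calc Real.exp (-t) * Real.log t ≤ Real.exp (-t) * t := by nlinarith
    _ = t * Real.exp (-t) := by ring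
  simpa using h0.neg

lemma parts_identity {x : ℝ} (hx : 0 < x) :
    ∫ t in Ioi x, Real.exp (-t) / t
      = (∫ t in Ioi x, Real.exp (-t) * Real.log t) - Real.exp (-x) * Real.log x := by
  set F : ℝ → ℝ := fun t => -(Real.exp (-t) * Real.log t) with hF
  set F' : ℝ → ℝ := fun t => Real.exp (-t) * Real.log t - Real.exp (-t) / t with hF'
  have hderiv : ∀ t ∈ Ioi x, HasDerivAt F (F' t) t := by
    intro t ht
    have ht0 : (0:ℝ) < t := hx.trans ht
    have h1 : HasDerivAt (fun t : ℝ => Real.exp (-t)) (-Real.exp (-t)) t := by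
      simpa using ((hasDerivAt_id t).neg.exp)
    have h2 : HasDerivAt Real.log t⁻¹ t := Real.hasDerivAt_log (ne_of_gt ht0)
    have h3 := (h1.mul h2)
    have : HasDerivAt (fun t : ℝ => Real.exp (-t) * Real.log t)
        (-Real.exp (-t) * Real.log t + Real.exp (-t) * t⁻¹) t := h3
    have h4 := this.neg
    refine (h4 : HasDerivAt (fun t => -(Real.exp (-t) * Real.log t)) _ t).congr_deriv ?_
    show _ = Real.exp (-t) * Real.log t - Real.exp (-t) / t
    field_simp
    ring
  have hint : IntegrableOn F' (Ioi x) :=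
    (intOn_exp_log.mono_set (Ioi_subset_Ioi hx.le)).sub (intOn_exp_div hx)
  have hcont : ContinuousWithinAt F (Ici x) x := by
    refine ContinuousAt.continuousWithinAt ?_
    have : ContinuousAt Real.log x := Real.continuousAt_log (ne_of_gt hx)
    exact (((Real.continuous_exp.comp continuous_neg).continuousAt).mul this).neg
  have hlim : Tendsto F atTop (nhds 0) := tendsto_exp_neg_mul_log
  have := integral_Ioi_of_hasDerivAt_of_tendsto hcont hderiv hint hlim
  have hsub := integral_sub (intOn_exp_log.mono_set (Ioi_subset_Ioi hx.le)) (intOn_exp_div hx)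
  rw [hF'] at this
  simp only [hF] at this
  rw [hsub] at this
  have : (∫ t in Ioi x, Real.exp (-t) * Real.log t) - ∫ t in Ioi x, Real.exp (-t) / t
      = Real.exp (-x) * Real.log x := by linarith [this]
  linarith [this]

lemma integral_exp_mul_self : ∫ u in Ioi (0:ℝ), Real.exp (-u) * u = 1 := by
  have h := (Real.Gamma_eq_integral (by norm_num : (0:ℝ) < 2)).symm
  rw [Real.Gamma_two] at h
  rw [← h]
  refine setIntegral_congr_fun measurableSet_Ioi (fun u hu => ?_)
  norm_num

lemma intOn_exp_mul_self : IntegrableOn (fun u => Real.exp (-u) * u) (Ioi (0:ℝ)) := by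
  have h := Real.GammaIntegral_convergent (by norm_num : (0:ℝ) < 2)
  refine h.congr_fun (fun u hu => ?_) measurableSet_Ioi
  norm_num

section cov

variable {x : ℝ}

lemma image_xexp (hx : 0 < x) : (fun u : ℝ => x * Real.exp (-u)) '' Ioi 0 = Ioo 0 x := by
  ext s
  constructor
  · rintro ⟨u, hu, rfl⟩
    have hu' : (0:ℝ) < u := hu
    simp only [mem_Ioo]
    constructor
    · positivity
    · have h1 : Real.exp (-u) < 1 := by
        rw [Real.exp_lt_one_iff]; linarith
      nlinarith
  · rintro ⟨h1, h2⟩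
    refine ⟨Real.log (x / s), ?_, ?_⟩
    · simp only [mem_Ioi]
      apply Real.log_pos
      rw [lt_div_iff₀ h1]; linarith
    · show x * Real.exp (-Real.log (x / s)) = s
      rw [← Real.log_inv, Real.exp_log (by positivity)]
      field_simp

lemma hasDeriv_xexp (u : ℝ) :
    HasDerivAt (fun u : ℝ => x * Real.exp (-u)) (x * (Real.exp (-u) * -1)) u :=
  ((hasDerivAt_id u).neg.exp).const_mul x

lemma injOn_xexp (hx : 0 < x) : InjOn (fun u : ℝ => x * Real.exp (-u)) (Ioi 0) := by
  intro u _ v _ h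
  simp only at h
  have := mul_left_cancel₀ (ne_of_gt hx) h
  have := Real.exp_injective this
  linarith

lemma abs_deriv_xexp (hx : 0 < x) (u : ℝ) :
    |x * (Real.exp (-u) * -1)| = x * Real.exp (-u) := by
  rw [abs_of_nonpos (by nlinarith [Real.exp_pos (-u), hx.le])]
  ring

lemma comp_log_diff (hx : 0 < x) (u : ℝ) (hu : u ∈ Ioi (0:ℝ)) :
    Real.log x - Real.log (x * Real.exp (-u)) = u := by
  rw [Real.log_mul (ne_of_gt hx) (ne_of_gt (Real.exp_pos _)), Real.log_exp]
  ring

lemma intOn_log_diff (hx : 0 < x) : IntegrableOn (fun t => Real.log x - Real.log t) (Ioc 0 x) := by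
  rw [integrableOn_Ioc_iff_integrableOn_Ioo, ← image_xexp hx]
  rw [integrableOn_image_iff_integrableOn_abs_deriv_smul measurableSet_Ioi
    (fun u _ => (hasDeriv_xexp (x := x) u).hasDerivWithinAt) (injOn_xexp hx)]
  refine IntegrableOn.congr_fun (intOn_exp_mul_self.const_mul x) (fun u hu => ?_) measurableSet_Ioi
  rw [smul_eq_mul, abs_deriv_xexp hx, comp_log_diff hx u hu]
  ring

lemma integral_log_diff (hx : 0 < x) : ∫ t in Ioc 0 x, (Real.log x - Real.log t) = x := by
  rw [integral_Ioc_eq_integral_Ioo, ← image_xexp hx,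
    integral_image_eq_integral_abs_deriv_smul measurableSet_Ioi
      (fun u _ => (hasDeriv_xexp (x := x) u).hasDerivWithinAt) (injOn_xexp hx)]
  have : ∀ u ∈ Ioi (0:ℝ),
      |x * (Real.exp (-u) * -1)| • (Real.log x - Real.log (x * Real.exp (-u)))
        = x * (Real.exp (-u) * u) := by
    intro u hu
    rw [smul_eq_mul, abs_deriv_xexp hx, comp_log_diff hx u hu]
    ring
  rw [setIntegral_congr_fun measurableSet_Ioi this, integral_const_mul,
    integral_exp_mul_self, mul_one]

end cov

lemma neg_Ei_le {x : ℝ} (hx : 0 < x) :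
    ∫ t in Ioi x, Real.exp (-t) / t
      ≤ -Real.eulerMascheroniConstant - Real.log x + x := by
  rw [parts_identity hx]
  -- split the full integral
  have hIoc_int : IntegrableOn (fun t => Real.exp (-t) * Real.log t) (Ioc 0 x) :=
    intOn_exp_log.mono_set Ioc_subset_Ioi_self
  have hIoi_int : IntegrableOn (fun t => Real.exp (-t) * Real.log t) (Ioi x) :=
    intOn_exp_log.mono_set (Ioi_subset_Ioi hx.le)
  have hsplit : (∫ t in Ioc 0 x, Real.exp (-t) * Real.log t)
      + (∫ t in Ioi x, Real.exp (-t) * Real.log t) = -Real.eulerMascheroniConstant := by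
    rw [← integral_exp_log, ← setIntegral_union (Ioc_disjoint_Ioi le_rfl) measurableSet_Ioi
      hIoc_int hIoi_int, Ioc_union_Ioi_eq_Ioi hx.le]
  -- the key Ioc bound
  have hpt : ∀ t ∈ Ioc (0:ℝ) x,
      Real.exp (-t) * (Real.log x - Real.log t) ≤ Real.log x - Real.log t := by
    intro t ht
    have h1 : Real.log t ≤ Real.log x := Real.log_le_log ht.1 ht.2
    have h2 : Real.exp (-t) ≤ 1 := Real.exp_le_one_iff.mpr (by linarith [ht.1])
    nlinarith [Real.exp_pos (-t)]
  have hint1 : IntegrableOn (fun t => Real.exp (-t) * (Real.log x - Real.log t)) (Ioc 0 x) := by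
    refine Integrable.mono' (intOn_log_diff hx) ?_ ?_
    · refine (ContinuousOn.aestronglyMeasurable ?_ measurableSet_Ioc)
      exact (Real.continuous_exp.comp continuous_neg).continuousOn.mul
        ((continuousOn_const.sub (Real.continuousOn_log.mono (fun t ht => ne_of_gt ht.1))))
    · filter_upwards [ae_restrict_mem measurableSet_Ioc] with t ht
      have h1 : Real.log t ≤ Real.log x := Real.log_le_log ht.1 ht.2
      have h2 : Real.exp (-t) ≤ 1 := Real.exp_le_one_iff.mpr (by linarith [ht.1])
      rw [Real.norm_eq_abs, abs_of_nonneg (by nlinarith [Real.exp_pos (-t)])]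
      nlinarith [Real.exp_pos (-t)]
  have hIoc : ∫ t in Ioc 0 x, Real.exp (-t) * (Real.log x - Real.log t) ≤ x := by
    calc ∫ t in Ioc 0 x, Real.exp (-t) * (Real.log x - Real.log t)
        ≤ ∫ t in Ioc 0 x, (Real.log x - Real.log t) :=
          setIntegral_mono_on hint1 (intOn_log_diff hx) measurableSet_Ioc hpt
      _ = x := integral_log_diff hx
  -- expand the Ioc integral
  have hexp_int : IntegrableOn (fun t => Real.exp (-t)) (Ioc 0 x) :=
    (Real.continuous_exp.comp continuous_neg).integrableOn_Ioc
  have hexp : ∫ t in Ioc 0 x, Real.exp (-t) = 1 - Real.exp (-x) := by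
    rw [← intervalIntegral.integral_of_le hx.le]
    have hd : ∀ t ∈ uIcc (0:ℝ) x, HasDerivAt (fun t => -Real.exp (-t)) (Real.exp (-t)) t := by
      intro t _
      simpa [Pi.neg_def] using (((hasDerivAt_id t).neg.exp).neg)
    rw [intervalIntegral.integral_eq_sub_of_hasDerivAt hd
      ((Real.continuous_exp.comp continuous_neg).intervalIntegrable 0 x)]
    show -Real.exp (-x) - -Real.exp (-0) = 1 - Real.exp (-x)
    rw [neg_zero, Real.exp_zero]
    ring
  have hexpand : ∫ t in Ioc 0 x, Real.exp (-t) * (Real.log x - Real.log t)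
      = (1 - Real.exp (-x)) * Real.log x - ∫ t in Ioc 0 x, Real.exp (-t) * Real.log t := by
    have h1 : ∀ t, Real.exp (-t) * (Real.log x - Real.log t)
        = Real.exp (-t) * Real.log x - Real.exp (-t) * Real.log t := fun t => by ring
    simp_rw [h1]
    rw [integral_sub (hexp_int.mul_const _) hIoc_int, integral_mul_const, hexp]
  rw [hexpand] at hIoc
  have := hsplit
  linarith

section part1

variable {a b : ℝ}

lemma hasDeriv_phi (hb0 : 0 < b) (t : ℝ) :
    HasDerivAt (fun t : ℝ => t * b ^ t) (b ^ t + t * b ^ t * Real.log b) t := by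
  have h := (hasDerivAt_id t).mul (Real.hasStrictDerivAt_const_rpow hb0 t).hasDerivAt
  refine (h : HasDerivAt (fun t : ℝ => t * b ^ t) _ t).congr_deriv ?_
  simp only [id]
  ring

lemma continuous_phi (hb0 : 0 < b) : Continuous (fun t : ℝ => t * b ^ t) :=
  continuous_iff_continuousAt.mpr fun t => (hasDeriv_phi hb0 t).continuousAt

lemma one_le_rpow' (hb : 1 < b) {t : ℝ} (ht : 0 ≤ t) : (1:ℝ) ≤ b ^ t :=
  calc (1:ℝ) = b ^ (0:ℝ) := (Real.rpow_zero b).symm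
  _ ≤ b ^ t := Real.rpow_le_rpow_of_exponent_le hb.le ht

lemma continuous_const_rpow (hb0 : 0 < b) : Continuous (fun t : ℝ => b ^ t) :=
  continuous_iff_continuousAt.mpr fun t =>
    (Real.hasStrictDerivAt_const_rpow hb0 t).hasDerivAt.continuousAt

lemma injOn_phi (hb : 1 < b) : InjOn (fun t : ℝ => t * b ^ t) (Ioi 0) := by
  have hmono : StrictMonoOn (fun t : ℝ => t * b ^ t) (Ioi 0) := by
    intro s hs t ht hst
    have hs' : (0:ℝ) < s := hs
    have h1 : b ^ s ≤ b ^ t := (Real.rpow_le_rpow_left_iff hb).mpr hst.le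
    have h2 : (0:ℝ) < b ^ s := Real.rpow_pos_of_pos (lt_trans one_pos hb) s
    simp only
    nlinarith
  exact hmono.injOn

lemma image_phi (hb : 1 < b) : (fun t : ℝ => t * b ^ t) '' Ioi 0 = Ioi 0 := by
  have hb0 : (0:ℝ) < b := lt_trans one_pos hb
  apply Subset.antisymm
  · rintro s ⟨t, ht, rfl⟩
    have ht' : (0:ℝ) < t := ht
    have := Real.rpow_pos_of_pos hb0 t
    simp only [mem_Ioi]
    positivity
  · intro v hv
    have hv' : (0:ℝ) < v := hv
    have h1 : (fun t : ℝ => t * b ^ t) 0 = 0 := by simp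
    have h2 : v < (fun t : ℝ => t * b ^ t) (v + 1) := by
      have hbe : (1:ℝ) ≤ b ^ (v + 1) := one_le_rpow' hb (by linarith)
      simp only
      nlinarith
    have hsub := intermediate_value_Ioo (by linarith : (0:ℝ) ≤ v + 1)
      ((continuous_phi hb0).continuousOn (s := Icc 0 (v+1)))
    have : v ∈ Ioo ((fun t : ℝ => t * b ^ t) 0) ((fun t : ℝ => t * b ^ t) (v + 1)) := by
      rw [h1]; exact ⟨hv', h2⟩
    exact Set.image_mono Ioo_subset_Ioi_self (hsub this)

lemma lhs_integrable (ha : 0 < a) (hb : 1 < b) :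
    IntegrableOn (fun t : ℝ => Real.exp (-(a * t * b ^ t))) (Ioi 0) := by
  have hb0 : (0:ℝ) < b := lt_trans one_pos hb
  refine Integrable.mono' (exp_neg_integrableOn_Ioi 0 ha) ?_ ?_
  · exact (Real.continuous_exp.comp
      ((continuous_const.mul continuous_id).mul (continuous_const_rpow hb0)).neg
      ).aestronglyMeasurable.restrict
  · filter_upwards [ae_restrict_mem measurableSet_Ioi] with t ht
    have ht' : (0:ℝ) < t := ht
    have hbe : (1:ℝ) ≤ b ^ t := one_le_rpow' hb ht'.le
    rw [Real.norm_eq_abs, abs_of_pos (Real.exp_pos _), Real.exp_le_exp]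
    nlinarith [mul_pos ha ht']

lemma g_integrable (ha : 0 < a) (hlb : 0 < Real.log b) :
    IntegrableOn (fun v : ℝ => Real.exp (-(a * v)) / (1 + v * Real.log b)) (Ioi 0) := by
  refine Integrable.mono' (exp_neg_integrableOn_Ioi 0 ha) ?_ ?_
  · refine (ContinuousOn.aestronglyMeasurable ?_ measurableSet_Ioi)
    refine ContinuousOn.div
      ((Real.continuous_exp.comp (continuous_const.mul continuous_id).neg).continuousOn)
      (continuousOn_const.add (continuousOn_id.mul continuousOn_const)) ?_
    intro v hv
    have hv' : (0:ℝ) < v := hv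
    show (1:ℝ) + v * Real.log b ≠ 0
    nlinarith
  · filter_upwards [ae_restrict_mem measurableSet_Ioi] with v hv
    have hv' : (0:ℝ) < v := hv
    have hd : (1:ℝ) ≤ 1 + v * Real.log b := by nlinarith
    have he : (0:ℝ) < Real.exp (-(a * v)) := Real.exp_pos _
    rw [Real.norm_eq_abs, abs_of_pos (by positivity)]
    calc Real.exp (-(a * v)) / (1 + v * Real.log b) ≤ Real.exp (-(a * v)) / 1 := by
          apply div_le_div_of_nonneg_left he.le one_pos hd
      _ = Real.exp (-(a * v)) := by rw [div_one]
      _ = Real.exp (-a * v) := by rw [neg_mul]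

end part1






/-- For `a > 0`, `b > 1` with `a/log b ≤ 1/2`,
`∫_0^∞ exp(-a t b^t) dt ≤ e^{a/log b} (-Ei(-a/log b))/log b
  ≤ e^{1/2} (-γ - log(a/log b) + 1/2)/log b`. -/
theorem integral_exp_Ei_bound (a b : ℝ) (ha : 0 < a) (hb : 1 < b)
    (hsmall : a / Real.log b ≤ 1 / 2) :
    (∫ t in Ioi (0 : ℝ), Real.exp (-(a * t * b ^ t)))
        ≤ Real.exp (a / Real.log b) * (-Ei (-(a / Real.log b))) / Real.log b ∧
      Real.exp (a / Real.log b) * (-Ei (-(a / Real.log b))) / Real.log b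
        ≤ Real.exp (1 / 2) *
            (-Real.eulerMascheroniConstant - Real.log (a / Real.log b) + 1 / 2)
              / Real.log b := by
  have hb0 : (0:ℝ) < b := lt_trans one_pos hb
  have hlb : (0:ℝ) < Real.log b := Real.log_pos hb
  set c : ℝ := a / Real.log b with hc_def
  have hc : 0 < c := div_pos ha hlb
  have hEi : -Ei (-c) = ∫ s in Ioi c, Real.exp (-s) / s := by
    simp [Ei]
  -- step 1 : compare with the integral of g
  set g : ℝ → ℝ := fun v => Real.exp (-(a * v)) / (1 + v * Real.log b) with hg_def
  have key1 : (∫ t in Ioi (0 : ℝ), Real.exp (-(a * t * b ^ t))) ≤ ∫ v in Ioi (0:ℝ), g v := by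
    have hcov : ∫ v in Ioi (0:ℝ), g v
        = ∫ t in Ioi (0:ℝ), |b ^ t + t * b ^ t * Real.log b| • g (t * b ^ t) := by
      conv_lhs => rw [← image_phi hb]
      exact integral_image_eq_integral_abs_deriv_smul measurableSet_Ioi
        (fun t _ => (hasDeriv_phi hb0 t).hasDerivWithinAt) (injOn_phi hb) g
    have hint2 : IntegrableOn
        (fun t : ℝ => |b ^ t + t * b ^ t * Real.log b| • g (t * b ^ t)) (Ioi 0) := by
      rw [← integrableOn_image_iff_integrableOn_abs_deriv_smul measurableSet_Ioi
        (fun t _ => (hasDeriv_phi hb0 t).hasDerivWithinAt) (injOn_phi hb) g,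
        image_phi hb]
      exact g_integrable ha hlb
    rw [hcov]
    refine setIntegral_mono_on (lhs_integrable ha hb) hint2 measurableSet_Ioi ?_
    intro t ht
    have ht' : (0:ℝ) < t := ht
    have hbe : (1:ℝ) ≤ b ^ t := one_le_rpow' hb ht'.le
    have hpos : (0:ℝ) < t * b ^ t * Real.log b :=
      mul_pos (mul_pos ht' (lt_of_lt_of_le zero_lt_one hbe)) hlb
    have hd : (0:ℝ) < 1 + t * b ^ t * Real.log b := by linarith
    have hphi : (1:ℝ) + t * b ^ t * Real.log b ≤ b ^ t + t * b ^ t * Real.log b := by nlinarith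
    have habs : |b ^ t + t * b ^ t * Real.log b| = b ^ t + t * b ^ t * Real.log b :=
      abs_of_pos (by nlinarith)
    have hgval : g (t * b ^ t)
        = Real.exp (-(a * t * b ^ t)) / (1 + t * b ^ t * Real.log b) := by
      simp only [hg_def]
      rw [show a * (t * b ^ t) = a * t * b ^ t by ring,
        show t * b ^ t * Real.log b = t * b ^ t * Real.log b from rfl]
    rw [smul_eq_mul, habs, hgval, mul_div_assoc']
    rw [le_div_iff₀ hd]
    have hE : (0:ℝ) < Real.exp (-(a * t * b ^ t)) := Real.exp_pos _
    nlinarith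
  -- step 2 : rescale
  have key2 : ∫ v in Ioi (0:ℝ), g v
      = (Real.log b)⁻¹ * ∫ u in Ioi (0:ℝ), Real.exp (-(c * u)) / (1 + u) := by
    have h := integral_comp_mul_left_Ioi (fun u => Real.exp (-(c * u)) / (1 + u)) 0 hlb
    rw [mul_zero] at h
    calc ∫ v in Ioi (0:ℝ), g v
        = ∫ v in Ioi (0:ℝ), (fun u => Real.exp (-(c * u)) / (1 + u)) (Real.log b * v) := by
          refine setIntegral_congr_fun measurableSet_Ioi (fun v _ => ?_)
          show Real.exp (-(a * v)) / (1 + v * Real.log b)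
            = Real.exp (-(c * (Real.log b * v))) / (1 + Real.log b * v)
          rw [mul_comm v (Real.log b)]
          congr 2
          rw [hc_def]
          field_simp
      _ = (Real.log b)⁻¹ • ∫ u in Ioi (0:ℝ), Real.exp (-(c * u)) / (1 + u) := h
      _ = (Real.log b)⁻¹ * ∫ u in Ioi (0:ℝ), Real.exp (-(c * u)) / (1 + u) := by rw [smul_eq_mul]
  -- step 3 : affine substitution
  have himg : (fun u : ℝ => c * (1 + u)) '' Ioi 0 = Ioi c := by
    ext s
    constructor
    · rintro ⟨u, hu, rfl⟩
      have hu' : (0:ℝ) < u := hu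
      show c < c * (1 + u)
      nlinarith
    · intro hs
      have hs' : c < s := hs
      refine ⟨s / c - 1, ?_, ?_⟩
      · show (0:ℝ) < s / c - 1
        rw [sub_pos, lt_div_iff₀ hc]
        linarith
      · show c * (1 + (s / c - 1)) = s
        field_simp
        ring
  have hinj : InjOn (fun u : ℝ => c * (1 + u)) (Ioi 0) := by
    intro u _ v _ h
    have := mul_left_cancel₀ hc.ne' h
    linarith
  have hderiv : ∀ u ∈ Ioi (0:ℝ), HasDerivWithinAt (fun u : ℝ => c * (1 + u)) c (Ioi 0) u := by
    intro u _
    have h := ((hasDerivAt_id u).const_add 1).const_mul c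
    simpa using h.hasDerivWithinAt
  have hcov3 : ∫ s in Ioi c, Real.exp (-s) / s
      = ∫ u in Ioi (0:ℝ), |c| • (Real.exp (-(c * (1 + u))) / (c * (1 + u))) := by
    conv_lhs => rw [← himg]
    exact integral_image_eq_integral_abs_deriv_smul measurableSet_Ioi
      (fun u hu => hderiv u hu) hinj (fun s => Real.exp (-s) / s)
  have hsimp : ∀ u ∈ Ioi (0:ℝ), |c| • (Real.exp (-(c * (1 + u))) / (c * (1 + u)))
      = Real.exp (-c) * (Real.exp (-(c * u)) / (1 + u)) := by
    intro u hu
    have hu' : (0:ℝ) < u := hu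
    rw [smul_eq_mul, abs_of_pos hc,
      show -(c * (1 + u)) = -c + -(c * u) by ring, Real.exp_add]
    have h1u : (1:ℝ) + u ≠ 0 := by linarith
    field_simp
  have key3 : ∫ u in Ioi (0:ℝ), Real.exp (-(c * u)) / (1 + u)
      = Real.exp c * ∫ s in Ioi c, Real.exp (-s) / s := by
    rw [hcov3, setIntegral_congr_fun measurableSet_Ioi hsimp, integral_const_mul,
      ← mul_assoc, ← Real.exp_add]
    simp
  have hInonneg : (0:ℝ) ≤ ∫ s in Ioi c, Real.exp (-s) / s :=
    setIntegral_nonneg measurableSet_Ioi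
      (fun s hs => div_nonneg (Real.exp_pos _).le (le_of_lt (hc.trans hs)))
  constructor
  · rw [hEi]
    calc (∫ t in Ioi (0 : ℝ), Real.exp (-(a * t * b ^ t)))
        ≤ ∫ v in Ioi (0:ℝ), g v := key1
      _ = (Real.log b)⁻¹ * ∫ u in Ioi (0:ℝ), Real.exp (-(c * u)) / (1 + u) := key2
      _ = (Real.log b)⁻¹ * (Real.exp c * ∫ s in Ioi c, Real.exp (-s) / s) := by rw [key3]
      _ = Real.exp c * (∫ s in Ioi c, Real.exp (-s) / s) / Real.log b := by
          rw [div_eq_mul_inv]; ring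
  · rw [hEi]
    have h2 : Real.exp c * ∫ s in Ioi c, Real.exp (-s) / s
        ≤ Real.exp (1/2) *
          (-Real.eulerMascheroniConstant - Real.log c + 1/2) := by
      refine mul_le_mul (Real.exp_le_exp.mpr hsmall)
        ((neg_Ei_le hc).trans (by linarith)) hInonneg (Real.exp_pos _).le
    exact (div_le_div_iff_of_pos_right hlb).mpr h2
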